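/- Fix an FU k, an opponent power vector p_{-k} with nonnegative entries, and a scalar α > 1. Assume that for every opponent vector q_{-k} with p_{-k} ≤ q_{-k} ≤ α·p_{-k} componentwise, the best response b = p̂_k(q_{-k}) satisfies h_{k,k}·b² ≥ p_a·(N_k + h_{0,k}·p_0 + h_{k,k}·b + Σ_{j≠k} h_{j,k}·q_j), and assume p̂_k(p_{-k}) > 0. Then the best response is scalable: α·p̂_k(p_{-k}) > p̂_k(α·p_{-k}). -/

import Mathlib

open Real Finset

/-- SINR of FU `k`. -/
noncomputable def sinr {K : ℕ} (hff : Fin K → Fin K → ℝ) (h0f N : Fin K → ℝ)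
    (p0 : ℝ) (k : Fin K) (p : Fin K → ℝ) : ℝ :=
  hff k k * p k / (N k + h0f k * p0 + ∑ j ∈ Finset.univ.erase k, hff j k * p j)

/-- Net payoff of FU `k`. -/
noncomputable def payoff {K : ℕ} (W pa p0 : ℝ) (hff : Fin K → Fin K → ℝ)
    (h0f hf0 N lam : Fin K → ℝ) (k : Fin K) (p : Fin K → ℝ) : ℝ :=
  W * Real.log (1 + sinr hff h0f N p0 k p) / (p k + pa) - lam k * hf0 k * p k

/-- `x` is a best response of FU `k` to the opponents' powers in `q`. -/
def IsBestResponse {K : ℕ} (W pa p0 : ℝ) (hff : Fin K → Fin K → ℝ)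
    (h0f hf0 N lam pmax : Fin K → ℝ) (k : Fin K) (q : Fin K → ℝ) (x : ℝ) : Prop :=
  x ∈ Set.Icc (0:ℝ) (pmax k) ∧
    ∀ y ∈ Set.Icc (0:ℝ) (pmax k),
      payoff W pa p0 hff h0f hf0 N lam k (Function.update q k y) ≤
        payoff W pa p0 hff h0f hf0 N lam k (Function.update q k x)

/-- Elementary logarithm bound: `1 - b/a ≤ log a - log b` for positive `a, b`. -/
lemma log_ratio_lb {a b : ℝ} (ha : 0 < a) (hb : 0 < b) :
    1 - b / a ≤ Real.log a - Real.log b := by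
  have h := Real.log_le_sub_one_of_pos (div_pos hb ha)
  rw [Real.log_div hb.ne' ha.ne'] at h
  linarith

/-- The function `x ↦ h(x+pa)/(s+hx) - log(1+hx/s)` is antitone in `x`. -/
lemma phi_mono_x (h pa s x1 x2 : ℝ) (hh : 0 < h) (hpa : 0 < pa) (hs : 0 < s)
    (hx1 : 0 ≤ x1) (hx : x1 ≤ x2) :
    h * (x2 + pa) / (s + h * x2) - Real.log (1 + h * x2 / s) ≤
      h * (x1 + pa) / (s + h * x1) - Real.log (1 + h * x1 / s) := by
  have hx2 : 0 ≤ x2 := hx1.trans hx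
  have d1 : 0 < s + h * x1 := by nlinarith
  have d2 : 0 < s + h * x2 := by nlinarith
  have l1 : Real.log (1 + h * x1 / s) = Real.log (s + h * x1) - Real.log s := by
    rw [show 1 + h * x1 / s = (s + h * x1) / s by field_simp, Real.log_div d1.ne' hs.ne']
  have l2 : Real.log (1 + h * x2 / s) = Real.log (s + h * x2) - Real.log s := by
    rw [show 1 + h * x2 / s = (s + h * x2) / s by field_simp, Real.log_div d2.ne' hs.ne']
  have hlb := log_ratio_lb d2 d1
  have key : h * (x2 + pa) / (s + h * x2) - h * (x1 + pa) / (s + h * x1) ≤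
      1 - (s + h * x1) / (s + h * x2) := by
    rw [div_sub_div _ _ d2.ne' d1.ne',
      show (1:ℝ) - (s + h * x1) / (s + h * x2) = (h * x2 - h * x1) / (s + h * x2) by
        field_simp; ring,
      div_le_div_iff₀ (by positivity) d2]
    have e1 : 0 ≤ h * (x2 - x1) * ((s + h * x2) * (h * x1 + h * pa)) :=
      mul_nonneg (mul_nonneg hh.le (by linarith)) (mul_nonneg d2.le (by nlinarith))
    nlinarith [e1]
  linarith

/-- The function `s ↦ h(x+pa)/(s+hx) - log(1+hx/s)` is monotone in `s`
provided `s₂ · pa ≤ h · x²`. -/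
lemma phi_mono_s (h pa x s1 s2 : ℝ) (hh : 0 < h) (hpa : 0 < pa) (hx : 0 < x)
    (hs1 : 0 < s1) (hs : s1 ≤ s2) (hcond : s2 * pa ≤ h * x ^ 2) :
    h * (x + pa) / (s1 + h * x) - Real.log (1 + h * x / s1) ≤
      h * (x + pa) / (s2 + h * x) - Real.log (1 + h * x / s2) := by
  have hs2 : 0 < s2 := hs1.trans_le hs
  have d1 : 0 < s1 + h * x := by nlinarith
  have d2 : 0 < s2 + h * x := by nlinarith
  have l1 : Real.log (1 + h * x / s1) = Real.log (s1 + h * x) - Real.log s1 := by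
    rw [show 1 + h * x / s1 = (s1 + h * x) / s1 by field_simp, Real.log_div d1.ne' hs1.ne']
  have l2 : Real.log (1 + h * x / s2) = Real.log (s2 + h * x) - Real.log s2 := by
    rw [show 1 + h * x / s2 = (s2 + h * x) / s2 by field_simp, Real.log_div d2.ne' hs2.ne']
  have ha : 0 < s2 * (s1 + h * x) := by positivity
  have hb2 : 0 < s1 * (s2 + h * x) := by positivity
  have hlb := log_ratio_lb ha hb2
  rw [Real.log_mul hs2.ne' d1.ne', Real.log_mul hs1.ne' d2.ne'] at hlb
  have key : h * (x + pa) / (s1 + h * x) - h * (x + pa) / (s2 + h * x) ≤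
      1 - s1 * (s2 + h * x) / (s2 * (s1 + h * x)) := by
    rw [div_sub_div _ _ d1.ne' d2.ne',
      show (1:ℝ) - s1 * (s2 + h * x) / (s2 * (s1 + h * x))
          = h * x * (s2 - s1) / (s2 * (s1 + h * x)) by
        field_simp; ring,
      div_le_div_iff₀ (by positivity) (by positivity)]
    have e1 : 0 ≤ (s2 - s1) * (s1 + h * x) * h * (h * x ^ 2 - s2 * pa) :=
      mul_nonneg (mul_nonneg (mul_nonneg (by linarith) d1.le) hh.le) (by linarith)
    nlinarith [e1]
  linarith

/-- Scaling both the power and the interference by `α > 1` strictly decreases `φ`. -/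
lemma phi_scale (h pa b t α : ℝ) (hh : 0 < h) (hpa : 0 < pa) (hb : 0 < b)
    (ht : 0 < t) (hα : 1 < α) :
    h * (α * b + pa) / (α * t + h * (α * b)) - Real.log (1 + h * (α * b) / (α * t)) <
      h * (b + pa) / (t + h * b) - Real.log (1 + h * b / t) := by
  have hα0 : (0:ℝ) < α := by linarith
  have hl : 1 + h * (α * b) / (α * t) = 1 + h * b / t := by
    rw [show h * (α * b) / (α * t) = h * b / t by
      rw [show h * (α * b) = α * (h * b) by ring]; exact mul_div_mul_left _ _ hα0.ne']
  rw [hl, show α * t + h * (α * b) = α * (t + h * b) by ring, sub_lt_sub_iff_right]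
  have d : 0 < t + h * b := by nlinarith
  rw [div_lt_div_iff₀ (by positivity) d]
  nlinarith [mul_pos (mul_pos (mul_pos hh d) hpa) (sub_pos.2 hα)]

/-- Derivative of the one-variable net payoff. -/
lemma hasDerivAt_payoff1 (W pa lam' h s : ℝ) (hs : 0 < s) (hpa : 0 < pa)
    (hh : 0 ≤ h) {y : ℝ} (hy : 0 ≤ y) :
    HasDerivAt (fun x => W * Real.log (1 + h * x / s) / (x + pa) - lam' * x)
      (W * (h * (y + pa) / (s + h * y) - Real.log (1 + h * y / s)) / (y + pa) ^ 2 - lam')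
      y := by
  have hpos : 0 < 1 + h * y / s := by
    have : 0 ≤ h * y / s := div_nonneg (mul_nonneg hh hy) hs.le
    linarith
  have hne : y + pa ≠ 0 := by positivity
  have h1 : HasDerivAt (fun x : ℝ => 1 + h * x / s) (h / s) y := by
    simpa using (((hasDerivAt_id y).const_mul h).div_const s).const_add 1
  have h2 : HasDerivAt (fun x => Real.log (1 + h * x / s)) (h / s / (1 + h * y / s)) y :=
    h1.log hpos.ne'
  have h3 : HasDerivAt (fun x : ℝ => x + pa) 1 y := (hasDerivAt_id y).add_const pa
  have h4 := (h2.const_mul W).div h3 hne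
  have h5 := h4.sub ((hasDerivAt_id y).const_mul lam')
  refine HasDerivAt.congr_deriv h5 ?_
  have hsy : (0:ℝ) < s + h * y := by nlinarith [mul_nonneg hh hy]
  field_simp

/-- At a positive maximizer over `[0, M]`, the derivative is nonnegative. -/
lemma slope_nonneg_of_max {g : ℝ → ℝ} {b d M : ℝ} (hb : 0 < b) (hbM : b ≤ M)
    (hg : HasDerivAt g d b) (hmax : ∀ y ∈ Set.Icc (0:ℝ) M, g y ≤ g b) : 0 ≤ d := by
  have ht : Filter.Tendsto (slope g b) (nhdsWithin b (Set.Iio b)) (nhds d) :=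
    (hasDerivAt_iff_tendsto_slope.mp hg).mono_left
      (nhdsWithin_mono _ fun y hy => ne_of_lt hy)
  refine ge_of_tendsto ht ?_
  filter_upwards [Ioo_mem_nhdsLT_of_mem (Set.mem_Ioc.mpr ⟨hb, le_refl b⟩)] with y hy
  have h1 : g y ≤ g b := hmax y ⟨hy.1.le, hy.2.le.trans hbM⟩
  rw [slope_def_field]
  exact div_nonneg_of_nonpos (by linarith) (by linarith [hy.2])

/-- The central analytic contradiction. -/
lemma core_contradiction (W pa h t t' α lam' b b' : ℝ)
    (hW : 0 < W) (hpa : 0 < pa) (hh : 0 < h) (ht : 0 < t) (hα : 1 < α)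
    (hlam : 0 ≤ lam') (hbpos : 0 < b)
    (ht1 : t ≤ t') (ht2 : t' ≤ α * t) (hbb : α * b ≤ b')
    (FOC : W * (h * (b + pa) / (t + h * b) - Real.log (1 + h * b / t)) / (b + pa) ^ 2
        - lam' = 0)
    (COND : pa * (t + h * b) ≤ h * b ^ 2)
    (SLOPE : 0 ≤ W * (h * (b' + pa) / (t' + h * b') - Real.log (1 + h * b' / t'))
        / (b' + pa) ^ 2 - lam') :
    False := by
  have hα0 : (0:ℝ) < α := by linarith
  have ht' : 0 < t' := lt_of_lt_of_le ht ht1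
  have hx1 : 0 < α * b := mul_pos hα0 hbpos
  have hb'pos : 0 < b' := lt_of_lt_of_le hx1 hbb
  have hpt : pa * t ≤ h * b ^ 2 := by nlinarith [mul_pos (mul_pos hpa hh) hbpos]
  have hcond2 : α * t * pa ≤ h * (α * b) ^ 2 := by
    nlinarith [mul_le_mul_of_nonneg_left hpt (mul_pos hα0 hα0).le,
      mul_nonneg (mul_nonneg (by nlinarith : (0:ℝ) ≤ α * α - α) hpa.le) ht.le]
  have m1 := phi_mono_x h pa t' (α * b) b' hh hpa ht' hx1.le hbb
  have m2 := phi_mono_s h pa (α * b) t' (α * t) hh hpa hx1 ht' ht2 hcond2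
  have m3 := phi_scale h pa b t α hh hpa hbpos ht hα
  have hchain : h * (b' + pa) / (t' + h * b') - Real.log (1 + h * b' / t') <
      h * (b + pa) / (t + h * b) - Real.log (1 + h * b / t) := by linarith
  have hP : (0:ℝ) < (b + pa) ^ 2 := by positivity
  have hP' : (0:ℝ) < (b' + pa) ^ 2 := by positivity
  have h1 : W * (h * (b + pa) / (t + h * b) - Real.log (1 + h * b / t)) / (b + pa) ^ 2
      = lam' := by linarith
  have hWA := (div_eq_iff hP.ne').mp h1
  have h2 : lam' ≤ W * (h * (b' + pa) / (t' + h * b') - Real.log (1 + h * b' / t'))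
      / (b' + pa) ^ 2 := by linarith
  have hWA' := (le_div_iff₀ hP').mp h2
  have hble : b ≤ b' := by nlinarith
  have hPP : (b + pa) ^ 2 ≤ (b' + pa) ^ 2 :=
    pow_le_pow_left₀ (by positivity) (by linarith) 2
  have hstrict := mul_lt_mul_of_pos_left hchain hW
  linarith [hstrict, hWA, hWA', mul_le_mul_of_nonneg_left hPP hlam]

/-- The net payoff, after updating FU `k`'s power, as a function of that power. -/
lemma payoff_update {K : ℕ} (W pa p0 : ℝ) (hff : Fin K → Fin K → ℝ)
    (h0f hf0 N lam : Fin K → ℝ) (k : Fin K) (q : Fin K → ℝ) (y : ℝ) :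
    payoff W pa p0 hff h0f hf0 N lam k (Function.update q k y) =
      W * Real.log (1 + hff k k * y /
          (N k + h0f k * p0 + ∑ j ∈ Finset.univ.erase k, hff j k * q j)) / (y + pa)
        - lam k * hf0 k * y := by
  have hsum : ∑ j ∈ Finset.univ.erase k, hff j k * Function.update q k y j
      = ∑ j ∈ Finset.univ.erase k, hff j k * q j :=
    Finset.sum_congr rfl fun j hj => by
      rw [Function.update_of_ne (Finset.ne_of_mem_erase hj)]
  simp only [payoff, sinr, Function.update_self, hsum]

/-- Scalability of the best response: under the SINR-type condition on the order interval
between `p_{-k}` and `α·p_{-k}`, and positivity of the best response at `p_{-k}`,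
one has `α·p̂_k(p_{-k}) > p̂_k(α·p_{-k})` for every `α > 1`. -/
theorem bestResponse_scalable {K : ℕ} (hK : 1 ≤ K)
    (W pa p0 : ℝ) (hW : 0 < W) (hpa : 0 < pa) (hp0 : 0 ≤ p0)
    (hff : Fin K → Fin K → ℝ) (h0f hf0 N lam pmax : Fin K → ℝ)
    (hhff : ∀ i j, 0 < hff i j) (hh0f : ∀ i, 0 < h0f i) (hhf0 : ∀ i, 0 < hf0 i)
    (hN : ∀ i, 0 < N i) (hlam : ∀ i, 0 ≤ lam i) (hpmax : ∀ i, 0 < pmax i)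
    (k : Fin K) (p : Fin K → ℝ) (hp : ∀ i, i ≠ k → 0 ≤ p i)
    (α : ℝ) (hα : 1 < α)
    (hcond : ∀ q : Fin K → ℝ, (∀ i, i ≠ k → p i ≤ q i ∧ q i ≤ α * p i) →
      ∀ b : ℝ, IsBestResponse W pa p0 hff h0f hf0 N lam pmax k q b →
        pa * (N k + h0f k * p0 + hff k k * b + ∑ j ∈ Finset.univ.erase k, hff j k * q j) ≤
          hff k k * b ^ 2)
    (b b' : ℝ)
    (hb : IsBestResponse W pa p0 hff h0f hf0 N lam pmax k p b) (hbpos : 0 < b)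
    (hb' : IsBestResponse W pa p0 hff h0f hf0 N lam pmax k (fun i => α * p i) b') :
    b' < α * b := by
  by_contra hcon
  push_neg at hcon
  -- basic data
  have hbIcc := hb.1
  have hbmax := hb.2
  have hb'Icc := hb'.1
  have hb'max := hb'.2
  have hC := hcond p (fun i hi => ⟨le_rfl, by nlinarith [hp i hi]⟩) b hb
  have hSnn : 0 ≤ ∑ j ∈ Finset.univ.erase k, hff j k * p j :=
    Finset.sum_nonneg fun j hj =>
      mul_nonneg (hhff j k).le (hp j (Finset.ne_of_mem_erase hj))
  have hSα : (∑ j ∈ Finset.univ.erase k, hff j k * (α * p j))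
      = α * ∑ j ∈ Finset.univ.erase k, hff j k * p j := by
    rw [Finset.mul_sum]
    exact Finset.sum_congr rfl fun j _ => by ring
  simp only [payoff_update] at hbmax hb'max
  rw [hSα] at hb'max
  set S := ∑ j ∈ Finset.univ.erase k, hff j k * p j with hS_def
  set t := N k + h0f k * p0 + S with ht_def
  set t' := N k + h0f k * p0 + α * S with ht'_def
  have hmul0 : 0 ≤ h0f k * p0 := mul_nonneg (hh0f k).le hp0
  have hNk := hN k
  have ht : 0 < t := by rw [ht_def]; linarith
  have ht1 : t ≤ t' := by rw [ht_def, ht'_def]; nlinarith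
  have ht2 : t' ≤ α * t := by rw [ht_def, ht'_def]; nlinarith
  -- first-order condition at b
  have hb'pos : 0 < b' := lt_of_lt_of_le (mul_pos (by linarith) hbpos) hcon
  have hblt : b < pmax k := by nlinarith [hb'Icc.2, hcon]
  have hd1 := hasDerivAt_payoff1 W pa (lam k * hf0 k) (hff k k) t ht hpa (hhff k k).le
    hbpos.le
  have hloc : IsLocalMax
      (fun x => W * Real.log (1 + hff k k * x / t) / (x + pa) - lam k * hf0 k * x) b :=
    Filter.eventually_of_mem (Icc_mem_nhds hbpos hblt) fun y hy => hbmax y hy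
  have hFOC : W * (hff k k * (b + pa) / (t + hff k k * b)
      - Real.log (1 + hff k k * b / t)) / (b + pa) ^ 2 - lam k * hf0 k = 0 := by
    rw [← hd1.deriv]
    exact hloc.deriv_eq_zero
  -- nonnegative slope at b'
  have hd2 := hasDerivAt_payoff1 W pa (lam k * hf0 k) (hff k k) t' (ht.trans_le ht1) hpa
    (hhff k k).le hb'pos.le
  have hSLOPE := slope_nonneg_of_max hb'pos hb'Icc.2 hd2 fun y hy => hb'max y hy
  exact core_contradiction W pa (hff k k) t t' α (lam k * hf0 k) b b' hW hpa (hhff k k)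
    ht hα (mul_nonneg (hlam k) (hhf0 k).le) hbpos ht1 ht2 hcon hFOC
    (by rw [ht_def]; linarith [hC]) hSLOPE
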